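/- Let G be a bipartite graph (boundary vertices black) with an interior 2-valent white vertex v whose two incident edges (v,u) and (v,u') have weight 1, with u ≠ u' both black. Let G' be the graph obtained by deleting v and its two edges and identifying u with u'. Then for every boundary subset I, the almost perfect matchings of G with boundary I are in weight-preserving bijection with those of G'; consequently Δ_I(G, wt) = Δ_I(G', wt') for all I, where wt' is the induced weighting. -/
import Mathlib


/-!
STATEMENT 16: contraction of an interior 2-valent white vertex.

Edges are modelled abstractly: a finite type `ε` with endpoint maps
`wend : ε → V` (white endpoint) and `bend : ε → V` (black endpoint) and
weights `wt : ε → ℂ`.  The vertex `v` is an interior 2-valent white vertex,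
whose two edges `e₁ = (v,u)` and `e₂ = (v,u')` have weight `1`, with
`u ≠ u'` black interior vertices.  The contracted graph `G'` is obtained by
deleting `v, e₁, e₂` and identifying `u'` with `u` (so `bend' e = u` whenever
`bend e = u'`).  Then for every boundary subset `I` the almost perfect
matchings of `G` with boundary `I` are in weight-preserving bijection with
those of `G'` (the bijection removes the matched edge at `v`), and consequently
`Δ_I(G, wt) = Δ_I(G', wt)` for all `I`.
-/

open scoped Classical

noncomputable section

variable {V ε : Type*} [Fintype V] [Fintype ε]

/-- Matchings of the original graph `G`. -/
def IsAPM (wend bend : ε → V) (B : Finset V) (π : Finset ε) : Prop :=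
  (∀ w, w ∉ B →
    (π.filter (fun e => wend e = w ∨ bend e = w)).card = 1) ∧
  (∀ w ∈ B, (π.filter (fun e => wend e = w ∨ bend e = w)).card ≤ 1)

/-- Boundary subset of a matching (boundary vertices are black, hence occur
only as `bend`). -/
def bdrySub (bend : ε → V) (B : Finset V) (π : Finset ε) : Finset V :=
  B.filter (fun w => ∃ e ∈ π, bend e = w)

/-- Matchings of the contracted graph `G'`: the edges `e₁, e₂` are deleted,
the vertices `v` and `u'` are gone, and `u'` is identified with `u` via the
modified endpoint map `bend'`. -/
def IsAPM' (wend bend' : ε → V) (B : Finset V) (v u' : V)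
    (e₁ e₂ : ε) (π : Finset ε) : Prop :=
  e₁ ∉ π ∧ e₂ ∉ π ∧
  (∀ w, w ∉ B → w ≠ v → w ≠ u' →
    (π.filter (fun e => wend e = w ∨ bend' e = w)).card = 1) ∧
  (∀ w ∈ B, (π.filter (fun e => wend e = w ∨ bend' e = w)).card ≤ 1)

def Delta (wend bend : ε → V) (B : Finset V) (wt : ε → ℂ)
    (I : Finset V) : ℂ :=
  ∑ π ∈ Finset.univ.powerset.filter
      (fun π => IsAPM wend bend B π ∧ bdrySub bend B π = I),
    ∏ e ∈ π, wt e

def Delta' (wend bend' : ε → V) (B : Finset V) (v u' : V) (e₁ e₂ : ε)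
    (wt : ε → ℂ) (I : Finset V) : ℂ :=
  ∑ π ∈ Finset.univ.powerset.filter
      (fun π => IsAPM' wend bend' B v u' e₁ e₂ π ∧ bdrySub bend' B π = I),
    ∏ e ∈ π, wt e


private lemma filter_card_one {α : Type*} {s : Finset α} {p : α → Prop} [DecidablePred p]
    (h : (s.filter p).card = 1) : ∃ a, a ∈ s ∧ p a ∧ ∀ b ∈ s, p b → b = a := by
  obtain ⟨a, ha⟩ := Finset.card_eq_one.mp h
  have ham : a ∈ s.filter p := ha ▸ Finset.mem_singleton_self a
  rw [Finset.mem_filter] at ham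
  refine ⟨a, ham.1, ham.2, fun b hb hpb => ?_⟩
  have : b ∈ s.filter p := Finset.mem_filter.mpr ⟨hb, hpb⟩
  rw [ha, Finset.mem_singleton] at this
  exact this

theorem two_valent_contraction
    (white : V → Prop) (B : Finset V)                    -- boundary vertices
    (hBblack : ∀ w ∈ B, ¬ white w)
    (wend bend : ε → V) (wt : ε → ℂ)
    (hwhite : ∀ e, white (wend e) ∧ ¬ white (bend e))
    (v u u' : V) (e₁ e₂ : ε)
    (hv : white v) (hvB : v ∉ B)                         -- `v` interior white
    (he₁ : wend e₁ = v ∧ bend e₁ = u)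
    (he₂ : wend e₂ = v ∧ bend e₂ = u')
    (hne : e₁ ≠ e₂) (huu' : u ≠ u')
    (hu : ¬ white u) (hu' : ¬ white u')
    (huB : u ∉ B) (hu'B : u' ∉ B)                        -- `u, u'` interior
    (h2val : ∀ e, wend e = v → e = e₁ ∨ e = e₂)          -- `v` is 2-valent
    (hwt : wt e₁ = 1 ∧ wt e₂ = 1) :
    ∀ I : Finset V,
      (∃ Φ : {π : Finset ε // IsAPM wend bend B π ∧ bdrySub bend B π = I} ≃
             {π : Finset ε //
               IsAPM' wend (fun e => if bend e = u' then u else bend e) B v u'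
                 e₁ e₂ π ∧
               bdrySub (fun e => if bend e = u' then u else bend e) B π = I},
        ∀ p, ((Φ p : Finset ε)) = (p : Finset ε) \ {e₁, e₂} ∧
          (∏ e ∈ (Φ p : Finset ε), wt e) = ∏ e ∈ (p : Finset ε), wt e) ∧
      Delta wend bend B wt I
        = Delta' wend (fun e => if bend e = u' then u else bend e) B v u'
            e₁ e₂ wt I := by
  classical
  intro I
  have hvu : v ≠ u := fun h => hu (h ▸ hv)
  have hvu' : v ≠ u' := fun h => hu' (h ▸ hv)
  have hbnv : ∀ e, bend e ≠ v := fun e h => (hwhite e).2 (h ▸ hv)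
  have hwnu : ∀ e, wend e ≠ u := fun e h => hu (h ▸ (hwhite e).1)
  have hwnu' : ∀ e, wend e ≠ u' := fun e h => hu' (h ▸ (hwhite e).1)
  set bend' : ε → V := fun e => if bend e = u' then u else bend e with hbdef
  have hb'u : ∀ e, bend' e = u ↔ (bend e = u ∨ bend e = u') := by
    intro e
    by_cases h : bend e = u'
    · simp [hbdef, h]
    · simp [hbdef, h]
  have hb'w : ∀ e w, w ≠ u → w ≠ u' → (bend' e = w ↔ bend e = w) := by
    intro e w hw hw'
    by_cases h : bend e = u'
    · simp [hbdef, h, Ne.symm hw, Ne.symm hw']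
    · simp [hbdef, h]
  -- cover at a non-white vertex is via bend only
  have hcovb : ∀ (π : Finset ε) (w : V), ¬ white w →
      π.filter (fun e => wend e = w ∨ bend e = w) = π.filter (fun e => bend e = w) := by
    intro π w hw
    apply Finset.filter_congr
    intro e _
    constructor
    · rintro (h | h)
      · exact absurd (h ▸ (hwhite e).1) hw
      · exact h
    · exact Or.inr
  -- cover at v
  have hcovv : ∀ π : Finset ε,
      π.filter (fun e => wend e = v ∨ bend e = v) = π ∩ {e₁, e₂} := by
    intro π
    ext e
    simp only [Finset.mem_filter, Finset.mem_inter, Finset.mem_insert, Finset.mem_singleton]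
    constructor
    · rintro ⟨he, h | h⟩
      · exact ⟨he, h2val e h⟩
      · exact absurd h (hbnv e)
    · rintro ⟨he, rfl | rfl⟩
      · exact ⟨he, Or.inl he₁.1⟩
      · exact ⟨he, Or.inl he₂.1⟩
  -- exactly one of e₁, e₂ belongs to any APM
  have hone : ∀ π : Finset ε, IsAPM wend bend B π →
      (e₁ ∈ π ∧ e₂ ∉ π) ∨ (e₁ ∉ π ∧ e₂ ∈ π) := by
    intro π hπ
    have h1 := hπ.1 v hvB
    rw [hcovv] at h1
    by_cases h₁ : e₁ ∈ π <;> by_cases h₂ : e₂ ∈ π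
    · exfalso
      have hsub : π ∩ {e₁, e₂} = {e₁, e₂} := by
        apply Finset.inter_eq_right.mpr
        intro x hx
        simp only [Finset.mem_insert, Finset.mem_singleton] at hx
        rcases hx with rfl | rfl <;> assumption
      rw [hsub, Finset.card_insert_of_notMem (by simpa using hne),
        Finset.card_singleton] at h1
      omega
    · exact Or.inl ⟨h₁, h₂⟩
    · exact Or.inr ⟨h₁, h₂⟩
    · exfalso
      have hsub : π ∩ {e₁, e₂} = ∅ := by
        ext x
        simp only [Finset.mem_inter, Finset.mem_insert, Finset.mem_singleton,
          Finset.notMem_empty, iff_false, not_and]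
        rintro hx (rfl | rfl)
        · exact h₁ hx
        · exact h₂ hx
      rw [hsub] at h1
      simp at h1
  -- unique edges covering u and u' in an APM
  have hcovu' : ∀ π : Finset ε, IsAPM wend bend B π →
      ∃ f, f ∈ π ∧ bend f = u' ∧ ∀ g ∈ π, bend g = u' → g = f := by
    intro π hπ
    have h := hπ.1 u' hu'B
    rw [hcovb π u' hu'] at h
    exact filter_card_one h
  have hcovu : ∀ π : Finset ε, IsAPM wend bend B π →
      ∃ f, f ∈ π ∧ bend f = u ∧ ∀ g ∈ π, bend g = u → g = f := by
    intro π hπ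
    have h := hπ.1 u huB
    rw [hcovb π u hu] at h
    exact filter_card_one h
  -- the inverse map
  set Ginv : Finset ε → Finset ε :=
    fun π' => if (π'.filter (fun f => bend f = u')).Nonempty
      then insert e₁ π' else insert e₂ π' with hGdef
  ----------------------------------------------------------------
  -- forward direction
  ----------------------------------------------------------------
  have hfwd : ∀ π : Finset ε, IsAPM wend bend B π →
      IsAPM' wend bend' B v u' e₁ e₂ (π \ {e₁, e₂}) ∧
        bdrySub bend' B (π \ {e₁, e₂}) = bdrySub bend B π := by
    intro π hπ
    obtain ⟨f, hfπ, hfb, hfu⟩ := hcovu' π hπ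
    obtain ⟨g, hgπ, hgb, hgu⟩ := hcovu π hπ
    have hfe₁ : f ≠ e₁ := fun h => huu' (by rw [← he₁.2, ← h, hfb])
    have hge₂ : g ≠ e₂ := fun h => huu' (by rw [← hgb, h, he₂.2])
    -- cover equality away from v, u, u'
    have hcoveq : ∀ w, w ≠ v → w ≠ u → w ≠ u' →
        (π \ {e₁, e₂}).filter (fun e => wend e = w ∨ bend' e = w)
          = π.filter (fun e => wend e = w ∨ bend e = w) := by
      intro w hwv hwu hwu'
      ext x
      simp only [Finset.mem_filter, Finset.mem_sdiff, Finset.mem_insert,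
        Finset.mem_singleton, hb'w x w hwu hwu']
      constructor
      · rintro ⟨⟨hx, _⟩, h⟩
        exact ⟨hx, h⟩
      · rintro ⟨hx, h⟩
        refine ⟨⟨hx, ?_⟩, h⟩
        rintro (rfl | rfl)
        · rcases h with h | h
          · exact hwv (h.symm.trans he₁.1)
          · exact hwu (h.symm.trans he₁.2)
        · rcases h with h | h
          · exact hwv (h.symm.trans he₂.1)
          · exact hwu' (h.symm.trans he₂.2)
    -- the new cover at u is a singleton
    have hcovunew : ∃ f₀ : ε, (π \ ({e₁, e₂} : Finset ε)).filter
        (fun e => wend e = u ∨ bend' e = u) = {f₀} := by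
      rcases hone π hπ with ⟨h₁, h₂⟩ | ⟨h₁, h₂⟩
      · refine ⟨f, ?_⟩
        ext x
        simp only [Finset.mem_filter, Finset.mem_sdiff, Finset.mem_insert,
          Finset.mem_singleton, hb'u x]
        constructor
        · rintro ⟨⟨hx, hx'⟩, h⟩
          rcases h with h | h | h
          · exact absurd h (hwnu x)
          · exact absurd ((hgu x hx h).trans (hgu e₁ h₁ he₁.2).symm)
              (fun hh => hx' (Or.inl hh))
          · exact hfu x hx h
        · rintro rfl
          exact ⟨⟨hfπ, fun hh => hh.elim (fun h => hfe₁ h)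
            (fun h => h₂ (h ▸ hfπ))⟩, Or.inr (Or.inr hfb)⟩
      · refine ⟨g, ?_⟩
        ext x
        simp only [Finset.mem_filter, Finset.mem_sdiff, Finset.mem_insert,
          Finset.mem_singleton, hb'u x]
        constructor
        · rintro ⟨⟨hx, hx'⟩, h⟩
          rcases h with h | h | h
          · exact absurd h (hwnu x)
          · exact hgu x hx h
          · exact absurd ((hfu x hx h).trans (hfu e₂ h₂ he₂.2).symm)
              (fun hh => hx' (Or.inr hh))
        · rintro rfl
          exact ⟨⟨hgπ, fun hh => hh.elim (fun h => h₁ (h ▸ hgπ))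
            (fun h => hge₂ h)⟩, Or.inr (Or.inl hgb)⟩
    obtain ⟨f₀, hf₀⟩ := hcovunew
    refine ⟨⟨by simp, by simp, ?_, ?_⟩, ?_⟩
    · intro w hwB hwv hwu'
      by_cases hwu : w = u
      · subst hwu
        rw [hf₀, Finset.card_singleton]
      · rw [hcoveq w hwv hwu hwu']
        exact hπ.1 w hwB
    · intro w hwB
      have hwv : w ≠ v := fun h => hvB (h ▸ hwB)
      have hwu : w ≠ u := fun h => huB (h ▸ hwB)
      have hwu' : w ≠ u' := fun h => hu'B (h ▸ hwB)
      rw [hcoveq w hwv hwu hwu']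
      exact hπ.2 w hwB
    · unfold bdrySub
      apply Finset.filter_congr
      intro w hwB
      have hwv : w ≠ v := fun h => hvB (h ▸ hwB)
      have hwu : w ≠ u := fun h => huB (h ▸ hwB)
      have hwu' : w ≠ u' := fun h => hu'B (h ▸ hwB)
      constructor
      · rintro ⟨e, he, hb⟩
        rw [Finset.mem_sdiff] at he
        exact ⟨e, he.1, (hb'w e w hwu hwu').mp hb⟩
      · rintro ⟨e, he, hb⟩
        refine ⟨e, Finset.mem_sdiff.mpr ⟨he, ?_⟩, (hb'w e w hwu hwu').mpr hb⟩
        simp only [Finset.mem_insert, Finset.mem_singleton]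
        rintro (rfl | rfl)
        · exact hwu (hb.symm.trans he₁.2)
        · exact hwu' (hb.symm.trans he₂.2)
  ----------------------------------------------------------------
  -- backward direction
  ----------------------------------------------------------------
  have hbwd : ∀ π' : Finset ε, IsAPM' wend bend' B v u' e₁ e₂ π' →
      IsAPM wend bend B (Ginv π') ∧ bdrySub bend B (Ginv π') = bdrySub bend' B π' := by
    intro π' hπ'
    obtain ⟨h1, h2, h3, h4⟩ := hπ'
    -- the unique edge covering the merged vertex u
    have hucard := h3 u huB (Ne.symm hvu) huu'
    have hueq : π'.filter (fun e => wend e = u ∨ bend' e = u)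
        = π'.filter (fun e => bend e = u ∨ bend e = u') := by
      apply Finset.filter_congr
      intro e _
      rw [hb'u e]
      constructor
      · rintro (h | h)
        · exact absurd h (hwnu e)
        · exact h
      · exact Or.inr
    rw [hueq] at hucard
    obtain ⟨f₀, hf₀π, hf₀b, hf₀u⟩ := filter_card_one hucard
    -- generic facts about inserting an edge a with wend a = v, bend a ∈ {u,u'}
    have hgen : ∀ a : ε, wend a = v → (bend a = u ∨ bend a = u') → a ∉ π' →
        (∀ w, w ≠ v → w ≠ u → w ≠ u' →
          (insert a π').filter (fun e => wend e = w ∨ bend e = w)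
            = π'.filter (fun e => wend e = w ∨ bend' e = w)) ∧
        ((insert a π').filter (fun e => wend e = v ∨ bend e = v) = {a}) ∧
        bdrySub bend B (insert a π') = bdrySub bend' B π' := by
      intro a hav hab haπ
      refine ⟨?_, ?_, ?_⟩
      · intro w hwv hwu hwu'
        ext x
        simp only [Finset.mem_filter, Finset.mem_insert, hb'w x w hwu hwu']
        constructor
        · rintro ⟨rfl | hx, h⟩
          · exfalso
            rcases h with h | h
            · exact hwv (h.symm.trans hav)
            · rcases hab with hb | hb
              · exact hwu (h.symm.trans hb)
              · exact hwu' (h.symm.trans hb)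
          · exact ⟨hx, h⟩
        · rintro ⟨hx, h⟩
          exact ⟨Or.inr hx, h⟩
      · ext x
        simp only [Finset.mem_filter, Finset.mem_insert, Finset.mem_singleton]
        constructor
        · rintro ⟨rfl | hx, h⟩
          · rfl
          · exfalso
            rcases h with h | h
            · rcases h2val x h with rfl | rfl
              · exact h1 hx
              · exact h2 hx
            · exact hbnv x h
        · rintro rfl
          exact ⟨Or.inl rfl, Or.inl hav⟩
      · unfold bdrySub
        apply Finset.filter_congr
        intro w hwB
        have hwv : w ≠ v := fun h => hvB (h ▸ hwB)
        have hwu : w ≠ u := fun h => huB (h ▸ hwB)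
        have hwu' : w ≠ u' := fun h => hu'B (h ▸ hwB)
        constructor
        · rintro ⟨e, he, hb⟩
          rcases Finset.mem_insert.mp he with rfl | he'
          · exfalso
            rcases hab with hb' | hb'
            · exact hwu (hb.symm.trans hb')
            · exact hwu' (hb.symm.trans hb')
          · exact ⟨e, he', (hb'w e w hwu hwu').mpr hb⟩
        · rintro ⟨e, he, hb⟩
          exact ⟨e, Finset.mem_insert_of_mem he, (hb'w e w hwu hwu').mp hb⟩
    -- case split on which of e₁ e₂ gets inserted
    by_cases hA : (π'.filter (fun f => bend f = u')).Nonempty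
    · -- bend f₀ = u', insert e₁
      obtain ⟨f₁, hf₁⟩ := hA
      rw [Finset.mem_filter] at hf₁
      have hf₁f₀ : f₁ = f₀ := hf₀u f₁ hf₁.1 (Or.inr hf₁.2)
      have hf₀b' : bend f₀ = u' := hf₁f₀ ▸ hf₁.2
      have hnou : ∀ x ∈ π', bend x ≠ u := by
        intro x hx hbx
        have := hf₀u x hx (Or.inl hbx)
        rw [this, hf₀b'] at hbx
        exact huu' hbx.symm
      have hG : Ginv π' = insert e₁ π' := by
        rw [hGdef]
        exact if_pos ⟨f₁, Finset.mem_filter.mpr hf₁⟩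
      have he₁π : e₁ ∉ π' := h1
      obtain ⟨hgcov, hgv, hgbdry⟩ := hgen e₁ he₁.1 (Or.inl he₁.2) he₁π
      -- cover at u is {e₁}
      have hcu : (insert e₁ π').filter (fun e => wend e = u ∨ bend e = u) = {e₁} := by
        ext x
        simp only [Finset.mem_filter, Finset.mem_insert, Finset.mem_singleton]
        constructor
        · rintro ⟨rfl | hx, h⟩
          · rfl
          · exfalso
            rcases h with h | h
            · exact hwnu x h
            · exact hnou x hx h
        · rintro rfl
          exact ⟨Or.inl rfl, Or.inr he₁.2⟩
      -- cover at u' is {f₀}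
      have hcu' : (insert e₁ π').filter (fun e => wend e = u' ∨ bend e = u') = {f₀} := by
        ext x
        simp only [Finset.mem_filter, Finset.mem_insert, Finset.mem_singleton]
        constructor
        · rintro ⟨rfl | hx, h⟩
          · exfalso
            rcases h with h | h
            · exact hvu' (he₁.1.symm.trans h)
            · exact huu' (he₁.2.symm.trans h)
          · rcases h with h | h
            · exact absurd h (hwnu' x)
            · exact hf₀u x hx (Or.inr h)
        · rintro rfl
          exact ⟨Or.inr hf₀π, Or.inr hf₀b'⟩
      rw [hG]
      refine ⟨⟨?_, ?_⟩, hgbdry⟩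
      · intro w hwB
        by_cases hwv : w = v
        · subst hwv; rw [hgv, Finset.card_singleton]
        · by_cases hwu : w = u
          · subst hwu; rw [hcu, Finset.card_singleton]
          · by_cases hwu' : w = u'
            · subst hwu'; rw [hcu', Finset.card_singleton]
            · rw [hgcov w hwv hwu hwu']
              exact h3 w hwB hwv hwu'
      · intro w hwB
        have hwv : w ≠ v := fun h => hvB (h ▸ hwB)
        have hwu : w ≠ u := fun h => huB (h ▸ hwB)
        have hwu' : w ≠ u' := fun h => hu'B (h ▸ hwB)
        rw [hgcov w hwv hwu hwu']
        exact h4 w hwB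
    · -- no edge of π' has bend = u', so bend f₀ = u, insert e₂
      have hnou' : ∀ x ∈ π', bend x ≠ u' := by
        intro x hx hbx
        exact hA ⟨x, Finset.mem_filter.mpr ⟨hx, hbx⟩⟩
      have hf₀b' : bend f₀ = u := by
        rcases hf₀b with h | h
        · exact h
        · exact absurd h (hnou' f₀ hf₀π)
      have hG : Ginv π' = insert e₂ π' := by
        rw [hGdef]
        exact if_neg hA
      have he₂π : e₂ ∉ π' := h2
      obtain ⟨hgcov, hgv, hgbdry⟩ := hgen e₂ he₂.1 (Or.inr he₂.2) he₂π
      have hcu' : (insert e₂ π').filter (fun e => wend e = u' ∨ bend e = u') = {e₂} := by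
        ext x
        simp only [Finset.mem_filter, Finset.mem_insert, Finset.mem_singleton]
        constructor
        · rintro ⟨rfl | hx, h⟩
          · rfl
          · exfalso
            rcases h with h | h
            · exact hwnu' x h
            · exact hnou' x hx h
        · rintro rfl
          exact ⟨Or.inl rfl, Or.inr he₂.2⟩
      have hcu : (insert e₂ π').filter (fun e => wend e = u ∨ bend e = u) = {f₀} := by
        ext x
        simp only [Finset.mem_filter, Finset.mem_insert, Finset.mem_singleton]
        constructor
        · rintro ⟨rfl | hx, h⟩
          · exfalso
            rcases h with h | h
            · exact hvu (he₂.1.symm.trans h)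
            · exact huu' ((he₂.2.symm.trans h).symm)
          · rcases h with h | h
            · exact absurd h (hwnu x)
            · exact hf₀u x hx (Or.inl h)
        · rintro rfl
          exact ⟨Or.inr hf₀π, Or.inr hf₀b'⟩
      rw [hG]
      refine ⟨⟨?_, ?_⟩, hgbdry⟩
      · intro w hwB
        by_cases hwv : w = v
        · subst hwv; rw [hgv, Finset.card_singleton]
        · by_cases hwu : w = u
          · subst hwu; rw [hcu, Finset.card_singleton]
          · by_cases hwu' : w = u'
            · subst hwu'; rw [hcu', Finset.card_singleton]
            · rw [hgcov w hwv hwu hwu']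
              exact h3 w hwB hwv hwu'
      · intro w hwB
        have hwv : w ≠ v := fun h => hvB (h ▸ hwB)
        have hwu : w ≠ u := fun h => huB (h ▸ hwB)
        have hwu' : w ≠ u' := fun h => hu'B (h ▸ hwB)
        rw [hgcov w hwv hwu hwu']
        exact h4 w hwB
  ----------------------------------------------------------------
  -- inverse properties
  ----------------------------------------------------------------
  have hGF : ∀ π : Finset ε, IsAPM wend bend B π → Ginv (π \ {e₁, e₂}) = π := by
    intro π hπ
    obtain ⟨f, hfπ, hfb, hfu⟩ := hcovu' π hπ
    have hfe₁ : f ≠ e₁ := fun h => huu' (by rw [← he₁.2, ← h, hfb])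
    rcases hone π hπ with ⟨h₁, h₂⟩ | ⟨h₁, h₂⟩
    · have hfe₂ : f ≠ e₂ := fun h => h₂ (h ▸ hfπ)
      have hA : ((π \ ({e₁, e₂} : Finset ε)).filter (fun f => bend f = u')).Nonempty := by
        refine ⟨f, Finset.mem_filter.mpr ⟨Finset.mem_sdiff.mpr ⟨hfπ, ?_⟩, hfb⟩⟩
        simp only [Finset.mem_insert, Finset.mem_singleton]
        rintro (rfl | rfl)
        · exact hfe₁ rfl
        · exact hfe₂ rfl
      rw [hGdef]
      simp only
      rw [if_pos hA]
      ext x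
      simp only [Finset.mem_insert, Finset.mem_sdiff, Finset.mem_singleton]
      constructor
      · rintro (rfl | ⟨hx, _⟩)
        · exact h₁
        · exact hx
      · intro hx
        by_cases hxe₁ : x = e₁
        · exact Or.inl hxe₁
        · refine Or.inr ⟨hx, ?_⟩
          rintro (rfl | rfl)
          · exact hxe₁ rfl
          · exact h₂ hx
    · have hfe₂ : f = e₂ := (hfu e₂ h₂ he₂.2).symm
      have hA : ¬ ((π \ ({e₁, e₂} : Finset ε)).filter (fun f => bend f = u')).Nonempty := by
        rintro ⟨x, hx⟩
        rw [Finset.mem_filter, Finset.mem_sdiff] at hx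
        have : x = f := hfu x hx.1.1 hx.2
        rw [this, hfe₂] at hx
        exact hx.1.2 (by simp)
      rw [hGdef]
      simp only
      rw [if_neg hA]
      ext x
      simp only [Finset.mem_insert, Finset.mem_sdiff, Finset.mem_singleton]
      constructor
      · rintro (rfl | ⟨hx, _⟩)
        · exact h₂
        · exact hx
      · intro hx
        by_cases hxe₂ : x = e₂
        · exact Or.inl hxe₂
        · refine Or.inr ⟨hx, ?_⟩
          rintro (rfl | rfl)
          · exact h₁ hx
          · exact hxe₂ rfl
  have hFG : ∀ π' : Finset ε, e₁ ∉ π' → e₂ ∉ π' → Ginv π' \ {e₁, e₂} = π' := by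
    intro π' h1 h2
    have key : ∀ a : ε, (a = e₁ ∨ a = e₂) → insert a π' \ ({e₁, e₂} : Finset ε) = π' := by
      intro a ha
      ext x
      simp only [Finset.mem_sdiff, Finset.mem_insert, Finset.mem_singleton]
      constructor
      · rintro ⟨rfl | hx, hx'⟩
        · exact absurd ha hx'
        · exact hx
      · intro hx
        refine ⟨Or.inr hx, ?_⟩
        rintro (rfl | rfl)
        · exact h1 hx
        · exact h2 hx
    rw [hGdef]
    simp only
    split_ifs with h
    · exact key e₁ (Or.inl rfl)
    · exact key e₂ (Or.inr rfl)
  -- product preservation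
  have hprod : ∀ π : Finset ε, IsAPM wend bend B π →
      (∏ e ∈ π \ {e₁, e₂}, wt e) = ∏ e ∈ π, wt e := by
    intro π hπ
    rcases hone π hπ with ⟨h₁, h₂⟩ | ⟨h₁, h₂⟩
    · have : π \ ({e₁, e₂} : Finset ε) = π.erase e₁ := by
        ext x
        simp only [Finset.mem_sdiff, Finset.mem_erase, Finset.mem_insert,
          Finset.mem_singleton]
        constructor
        · rintro ⟨hx, hx'⟩
          exact ⟨fun h => hx' (Or.inl h), hx⟩
        · rintro ⟨hx', hx⟩
          refine ⟨hx, ?_⟩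
          rintro (rfl | rfl)
          · exact hx' rfl
          · exact h₂ hx
      rw [this, Finset.prod_erase _ hwt.1]
    · have : π \ ({e₁, e₂} : Finset ε) = π.erase e₂ := by
        ext x
        simp only [Finset.mem_sdiff, Finset.mem_erase, Finset.mem_insert,
          Finset.mem_singleton]
        constructor
        · rintro ⟨hx, hx'⟩
          exact ⟨fun h => hx' (Or.inr h), hx⟩
        · rintro ⟨hx', hx⟩
          refine ⟨hx, ?_⟩
          rintro (rfl | rfl)
          · exact h₁ hx
          · exact hx' rfl
      rw [this, Finset.prod_erase _ hwt.2]
  ----------------------------------------------------------------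
  -- assemble
  ----------------------------------------------------------------
  constructor
  · refine ⟨{
      toFun := fun p => ⟨(p : Finset ε) \ {e₁, e₂}, (hfwd p.1 p.2.1).1,
        by rw [(hfwd p.1 p.2.1).2, p.2.2]⟩
      invFun := fun q => ⟨Ginv q.1, (hbwd q.1 q.2.1).1,
        by rw [(hbwd q.1 q.2.1).2, q.2.2]⟩
      left_inv := fun p => Subtype.ext (hGF p.1 p.2.1)
      right_inv := fun q => Subtype.ext (hFG q.1 q.2.1.1 q.2.1.2.1) }, ?_⟩
    intro p
    exact ⟨rfl, hprod p.1 p.2.1⟩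
  · unfold Delta Delta'
    refine Finset.sum_bij' (fun π _ => π \ {e₁, e₂}) (fun π' _ => Ginv π') ?_ ?_ ?_ ?_ ?_
    · intro π hπ
      simp only [Finset.mem_filter, Finset.mem_powerset] at hπ ⊢
      exact ⟨Finset.subset_univ _, (hfwd π hπ.2.1).1, by rw [(hfwd π hπ.2.1).2, hπ.2.2]⟩
    · intro π' hπ'
      simp only [Finset.mem_filter, Finset.mem_powerset] at hπ' ⊢
      exact ⟨Finset.subset_univ _, (hbwd π' hπ'.2.1).1, by rw [(hbwd π' hπ'.2.1).2, hπ'.2.2]⟩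
    · intro π hπ
      simp only [Finset.mem_filter, Finset.mem_powerset] at hπ
      exact hGF π hπ.2.1
    · intro π' hπ'
      simp only [Finset.mem_filter, Finset.mem_powerset] at hπ'
      exact hFG π' hπ'.2.1.1 hπ'.2.1.2.1
    · intro π hπ
      simp only [Finset.mem_filter, Finset.mem_powerset] at hπ
      exact (hprod π hπ.2.1).symm


end
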